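/- Fix an integer r ≥ 1 and a finite color set of size l. If an ideal X of edge-colored complete graphs (colorings (n,χ) with χ : 2-subsets of [n] → [l], under discrete containment) contains an r-rich coloring for every r ≥ 1, then |X_n| ≥ n for all n ≥ 1. -/

import Mathlib

/-- A (directed representation of an) edge: a pair of vertices `p` with `p.1 < p.2`. -/
abbrev Edge (n : ℕ) := {p : Fin n × Fin n // p.1 < p.2}

/-- An edge-`C`-colored complete graph: a number of vertices together with a coloring
of all edges by elements of `C`. -/
abbrev Coloring (C : Type) := (n : ℕ) × (Edge n → C)

/-- Build an edge from natural numbers `i < j < n`. -/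
def mkE {n : ℕ} (i j : ℕ) (hij : i < j) (hj : j < n) : Edge n :=
  ⟨(⟨i, lt_trans hij hj⟩, ⟨j, hj⟩), Fin.mk_lt_mk.mpr hij⟩

/-- The image of an edge under a strictly increasing vertex map. -/
def edgeMap {a b : ℕ} (f : Fin a → Fin b) (hf : StrictMono f) (e : Edge a) : Edge b :=
  ⟨(f e.1.1, f e.1.2), hf e.2⟩

/-- Containment of colorings: `K ⪯ L` via a strictly increasing vertex map that sends
the color of each edge to a `le`-larger color. -/
def ColLe {C : Type} (le : C → C → Prop) (K L : Coloring C) : Prop :=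
  ∃ f : Fin K.1 → Fin L.1, ∃ hf : StrictMono f,
    ∀ e : Edge K.1, le (K.2 e) (L.2 (edgeMap f hf e))

/-- A lower ideal of colorings. -/
def IsIdeal {C : Type} (le : C → C → Prop) (X : Set (Coloring C)) : Prop :=
  ∀ K L : Coloring C, ColLe le K L → L ∈ X → K ∈ X

/-- The reversal of an edge under the order-reversing permutation of the vertices. -/
def revE {n : ℕ} (e : Edge n) : Edge n :=
  ⟨(e.1.2.rev, e.1.1.rev), Fin.rev_lt_rev.mpr e.2⟩

/-- The reversal of a coloring. -/
def revC {n : ℕ} {C : Type} (χ : Edge n → C) : Edge n → C := fun e => χ (revE e)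

/-- A coloring on `2r-1` vertices is of type 1 (0-indexed version of:
`χ({i,i+1}) = a` for `1 ≤ i ≤ r-1` and `χ({r,r+1}) = b` for two distinct colors). -/
def Type1 {C : Type} (r : ℕ) (χ : Edge (2 * r - 1) → C) : Prop :=
  ∃ a b : C, a ≠ b ∧
    (∀ (t : ℕ) (h : t + 2 ≤ r), χ (mkE t (t + 1) (by omega) (by omega)) = a) ∧
    (∀ h : r < 2 * r - 1, χ (mkE (r - 1) r (by omega) h) = b)

/-- A coloring on `2r-1` vertices is of type 2 (0-indexed version of:
`χ({1,i}) = a` for `2 ≤ i ≤ r` and `χ({1,r+1}) = b` for two distinct colors). -/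
def Type2 {C : Type} (r : ℕ) (χ : Edge (2 * r - 1) → C) : Prop :=
  ∃ a b : C, a ≠ b ∧
    (∀ (t : ℕ) (h1 : 1 ≤ t) (h2 : t ≤ r - 1), χ (mkE 0 t (by omega) (by omega)) = a) ∧
    (∀ h : r < 2 * r - 1, χ (mkE 0 r (by omega) h) = b)

/-- An `r`-rich coloring: on `2r-1` vertices, of type 1 or type 2, in it or its reversal. -/
def Rich {C : Type} (r : ℕ) (χ : Edge (2 * r - 1) → C) : Prop :=
  Type1 r χ ∨ Type1 r (revC χ) ∨ Type2 r χ ∨ Type2 r (revC χ)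

/-- `(n,χ)` contains an `r`-rich coloring (with respect to discrete containment). -/
def ContainsRich {C : Type} {n : ℕ} (r : ℕ) (χ : Edge n → C) : Prop :=
  ∃ χ' : Edge (2 * r - 1) → C, Rich r χ' ∧
    ∃ f : Fin (2 * r - 1) → Fin n, ∃ hf : StrictMono f,
      ∀ e : Edge (2 * r - 1), χ' e = χ (edgeMap f hf e)

lemma revE_revE {n : ℕ} (e : Edge n) : revE (revE e) = e := by
  apply Subtype.ext
  simp [revE, Fin.rev_rev]

lemma revC_injective {n : ℕ} {C : Type} : Function.Injective (@revC n C) := by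
  intro ψ ψ' hh
  funext e
  have := congrFun hh (revE e)
  simpa [revC, revE_revE] using this

lemma colLe_rev {C : Type} {m N : ℕ} (ψ : Edge m → C) (χ : Edge N → C)
    (h : ColLe (· = ·) ⟨m, ψ⟩ ⟨N, revC χ⟩) :
    ColLe (· = ·) ⟨m, revC ψ⟩ ⟨N, χ⟩ := by
  obtain ⟨f, hf, he⟩ := h
  have hg : StrictMono (fun i : Fin m => (f i.rev).rev) :=
    fun i j hij => Fin.rev_lt_rev.mpr (hf (Fin.rev_lt_rev.mpr hij))
  refine ⟨_, hg, fun e => ?_⟩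
  have h1 := he (revE e)
  have h2 : revE (edgeMap f hf (revE e)) = edgeMap (fun i => (f i.rev).rev) hg e := by
    apply Subtype.ext
    simp [revE, edgeMap]
  calc revC ψ e = revC χ (edgeMap f hf (revE e)) := h1
    _ = χ (revE (edgeMap f hf (revE e))) := rfl
    _ = χ (edgeMap _ hg e) := by rw [h2]

lemma type1_family {C : Type} {n : ℕ} (hn : 1 ≤ n) (χ : Edge (2 * n - 1) → C)
    (h : Type1 n χ) :
    ∃ ψ : Fin n → (Edge n → C), Function.Injective ψ ∧
      ∀ k, ColLe (· = ·) ⟨n, ψ k⟩ ⟨2 * n - 1, χ⟩ := by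
  obtain ⟨a, b, hab, ha, hb⟩ := h
  have hfm : ∀ k : Fin n, StrictMono
      (fun i : Fin n => (⟨k.1 + i.1, by have := k.2; have := i.2; omega⟩ : Fin (2 * n - 1))) := by
    intro k i j hij
    have : i.1 < j.1 := hij
    exact Fin.mk_lt_mk.mpr (by omega)
  refine ⟨fun k => fun e => χ (edgeMap _ (hfm k) e), ?_, fun k => ⟨_, hfm k, fun e => rfl⟩⟩
  -- injectivity
  have key : ∀ k k' : Fin n, k.1 < k'.1 →
      (fun e => χ (edgeMap _ (hfm k) e)) ≠ (fun e => χ (edgeMap _ (hfm k') e)) := by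
    intro k k' hkk' heq
    have hk' : k'.1 < n := k'.2
    have hk'1 : 1 ≤ k'.1 := by omega
    have hn2 : 2 ≤ n := by omega
    obtain ⟨i, hi⟩ : ∃ i, i = n - 1 - k'.1 := ⟨_, rfl⟩
    have hbe : χ (edgeMap _ (hfm k') (mkE i (i + 1) (by omega) (by omega))) = b := by
      have h2 : edgeMap _ (hfm k') (mkE i (i + 1) (by omega) (by omega)) =
          mkE (n - 1) n (by omega) (by omega) := by
        apply Subtype.ext
        apply Prod.ext <;> (apply Fin.ext) <;> simp [edgeMap, mkE] <;> (first | omega | (split <;> omega))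
      rw [h2]
      exact hb (by omega)
    have hae : χ (edgeMap _ (hfm k) (mkE i (i + 1) (by omega) (by omega))) = a := by
      have hk : k.1 < n := k.2
      have h2 : edgeMap _ (hfm k) (mkE i (i + 1) (by omega) (by omega)) =
          mkE (k.1 + i) (k.1 + i + 1) (by omega) (by omega) := by
        apply Subtype.ext
        apply Prod.ext <;> (apply Fin.ext) <;> simp [edgeMap, mkE] <;> (first | omega | (split <;> omega))
      rw [h2]
      exact ha (k.1 + i) (by omega)
    have := congrFun heq (mkE i (i + 1) (by omega) (by omega))
    rw [hae, hbe] at this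
    exact hab this
  intro k k' heq
  rcases lt_trichotomy k.1 k'.1 with hlt | heq' | hlt
  · exact absurd heq (key k k' hlt)
  · exact Fin.ext heq'
  · exact absurd heq.symm (key k' k hlt)

lemma type2_family {C : Type} {n : ℕ} (hn : 1 ≤ n) (χ : Edge (2 * n - 1) → C)
    (h : Type2 n χ) :
    ∃ ψ : Fin n → (Edge n → C), Function.Injective ψ ∧
      ∀ k, ColLe (· = ·) ⟨n, ψ k⟩ ⟨2 * n - 1, χ⟩ := by
  obtain ⟨a, b, hab, ha, hb⟩ := h
  have hfm : ∀ k : Fin n, StrictMono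
      (fun i : Fin n => (⟨if i.1 ≤ n - 1 - k.1 then i.1 else i.1 + k.1,
        by have := k.2; have := i.2; split <;> omega⟩ : Fin (2 * n - 1))) := by
    intro k i j hij
    have hij' : i.1 < j.1 := hij
    apply Fin.mk_lt_mk.mpr
    split <;> split <;> omega
  refine ⟨fun k => fun e => χ (edgeMap _ (hfm k) e), ?_, fun k => ⟨_, hfm k, fun e => rfl⟩⟩
  have key : ∀ k k' : Fin n, k.1 < k'.1 →
      (fun e => χ (edgeMap _ (hfm k) e)) ≠ (fun e => χ (edgeMap _ (hfm k') e)) := by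
    intro k k' hkk' heq
    have hk' : k'.1 < n := k'.2
    have hk'1 : 1 ≤ k'.1 := by omega
    have hn2 : 2 ≤ n := by omega
    obtain ⟨i, hi⟩ : ∃ i, i = n - k'.1 := ⟨_, rfl⟩
    have hbe : χ (edgeMap _ (hfm k') (mkE 0 i (by omega) (by omega))) = b := by
      have h2 : edgeMap _ (hfm k') (mkE 0 i (by omega) (by omega)) =
          mkE 0 n (by omega) (by omega) := by
        apply Subtype.ext
        apply Prod.ext <;> (apply Fin.ext) <;> simp [edgeMap, mkE] <;> (first | omega | (show (if i ≤ n - 1 - (k'.1) then i else i + k'.1) = n; split <;> omega))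
      rw [h2]
      exact hb (by omega)
    have hae : χ (edgeMap _ (hfm k) (mkE 0 i (by omega) (by omega))) = a := by
      have hk : k.1 < n := k.2
      have h2 : edgeMap _ (hfm k) (mkE 0 i (by omega) (by omega)) =
          mkE 0 i (by omega) (by omega) := by
        apply Subtype.ext
        apply Prod.ext <;> (apply Fin.ext) <;> simp [edgeMap, mkE] <;> (first | omega | (show (if i ≤ n - 1 - (k.1) then i else i + k.1) = i; split <;> omega))
      rw [h2]
      exact ha i (by omega) (by omega)
    have := congrFun heq (mkE 0 i (by omega) (by omega))
    rw [hae, hbe] at this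
    exact hab this
  intro k k' heq
  rcases lt_trichotomy k.1 k'.1 with hlt | heq' | hlt
  · exact absurd heq (key k k' hlt)
  · exact Fin.ext heq'
  · exact absurd heq.symm (key k' k hlt)

lemma rich_family {C : Type} {n : ℕ} (hn : 1 ≤ n) (χ : Edge (2 * n - 1) → C)
    (h : Rich n χ) :
    ∃ ψ : Fin n → (Edge n → C), Function.Injective ψ ∧
      ∀ k, ColLe (· = ·) ⟨n, ψ k⟩ ⟨2 * n - 1, χ⟩ := by
  have rev : (∃ ψ : Fin n → (Edge n → C), Function.Injective ψ ∧
      ∀ k, ColLe (· = ·) ⟨n, ψ k⟩ ⟨2 * n - 1, revC χ⟩) →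
      ∃ ψ : Fin n → (Edge n → C), Function.Injective ψ ∧
      ∀ k, ColLe (· = ·) ⟨n, ψ k⟩ ⟨2 * n - 1, χ⟩ := by
    rintro ⟨ψ, hinj, hle⟩
    exact ⟨fun k => revC (ψ k), fun k k' hk => hinj (revC_injective hk),
      fun k => colLe_rev _ _ (hle k)⟩
  rcases h with h | h | h | h
  · exact type1_family hn χ h
  · exact rev (type1_family hn (revC χ) h)
  · exact type2_family hn χ h
  · exact rev (type2_family hn (revC χ) h)

lemma finite_slice (l n : ℕ) (X : Set (Coloring (Fin l))) :
    Finite {K : Coloring (Fin l) // K ∈ X ∧ K.1 = n} := by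
  have : Function.Injective
      (fun K : {K : Coloring (Fin l) // K ∈ X ∧ K.1 = n} =>
        (fun e => K.1.2 (cast (congrArg Edge K.2.2.symm) e) : Edge n → Fin l)) := by
    rintro ⟨⟨m1, c1⟩, hm1, h1⟩ ⟨⟨m2, c2⟩, hm2, h2⟩ heq
    simp only at h1 h2
    subst h1
    subst h2
    have hcc : c1 = c2 := by
      funext e
      exact congrFun heq e
    subst hcc
    rfl
  exact Finite.of_injective _ this

/-- If an ideal `X` of edge `[l]`-colored complete graphs (under discrete
containment) contains an `r`-rich coloring for every `r ≥ 1`, then `|X_n| ≥ n` for all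
`n ≥ 1`. -/
theorem stmt_10 (l : ℕ) (X : Set (Coloring (Fin l))) (hX : IsIdeal (· = ·) X)
    (h : ∀ r : ℕ, 1 ≤ r → ∃ χ : Edge (2 * r - 1) → Fin l,
        Rich r χ ∧ (⟨2 * r - 1, χ⟩ : Coloring (Fin l)) ∈ X) :
    ∀ n : ℕ, 1 ≤ n → n ≤ Nat.card {K : Coloring (Fin l) // K ∈ X ∧ K.1 = n} := by
  intro n hn
  obtain ⟨χ, hrich, hmem⟩ := h n hn
  obtain ⟨ψ, hinj, hle⟩ := rich_family hn χ hrich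
  have : Finite {K : Coloring (Fin l) // K ∈ X ∧ K.1 = n} := finite_slice l n X
  have hg : Function.Injective
      (fun k : Fin n => (⟨⟨n, ψ k⟩, hX _ _ (hle k) hmem, rfl⟩ :
        {K : Coloring (Fin l) // K ∈ X ∧ K.1 = n})) := by
    intro k k' hkk'
    have := Subtype.ext_iff.mp hkk'
    exact hinj (sigma_mk_injective this)
  simpa using Nat.card_le_card_of_injective _ hg
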